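/- In the category with objects nonempty sets and arrows A → B the relations from M_fin(A) to B (Kleisli category of the finite-multiset comonad on Rel), a nonempty set A does not have enough points: there exist arrows y ≠ z : A → A such that y ∘ x = z ∘ x for every arrow x from the terminal object to A. -/

import Mathlib

/-- Arrows of the category `Rel`. -/
def Rel' (A B : Type) : Type := A → B → Prop

/-- Relational composition (`f` then `g`). -/
def Rel'.comp {A B C : Type} (f : Rel' A B) (g : Rel' B C) : Rel' A C :=
  fun a c => ∃ b, f a b ∧ g b c

/-- Identity relation. -/
def Rel'.id (A : Type) : Rel' A A := fun a b => a = b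

/-- Action of the finite multiset functor `T` on relations:
`T(f) = {([α₁,…,α_n],[β₁,…,β_n]) | (α_i,β_i) ∈ f}`. -/
def Tmap {A B : Type} (f : Rel' A B) : Rel' (Multiset A) (Multiset B) :=
  fun m m' => ∃ l : List (A × B), (∀ p ∈ l, f p.1 p.2) ∧
    m = ↑(l.map Prod.fst) ∧ m' = ↑(l.map Prod.snd)

/-- Counit `d_A = {([α],α)}`. -/
def dRel (A : Type) : Rel' (Multiset A) A := fun m α => m = {α}

/-- Comultiplication `δ_A = {(a₁+…+a_n, [a₁,…,a_n])}`. -/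
def δRel (A : Type) : Rel' (Multiset A) (Multiset (Multiset A)) :=
  fun m ms => m = ms.sum

/-- Kleisli composition (`f : A → B` then `g : B → C`). -/
def kcomp {A B C : Type} (f : Rel' (Multiset A) B) (g : Rel' (Multiset B) C) :
    Rel' (Multiset A) C :=
  (δRel A).comp ((Tmap f).comp g)

lemma empty_ms (m : Multiset Empty) : m = 0 :=
  Multiset.eq_zero_of_forall_notMem fun a _ => a.elim

lemma kcomp_iff {A : Type} (x : Rel' (Multiset Empty) A) (α : A) (S : Multiset A)
    (hS : S ≠ 0) (hSα : ∀ a ∈ S, a = α) (m : Multiset Empty) (c : A) :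
    kcomp x (fun m' a => m' = S ∧ a = α) m c ↔ (x 0 α ∧ c = α) := by
  constructor
  · rintro ⟨ms, _, b, ⟨l, hl, _, hb⟩, hbS, rfl⟩
    refine ⟨?_, rfl⟩
    have hlne : l ≠ [] := by
      rintro rfl
      simp [hbS] at hb
      exact hS hb
    obtain ⟨p, hp⟩ := List.exists_mem_of_ne_nil l hlne
    have h2 : p.2 = c := by
      apply hSα
      rw [← hbS, hb]
      exact Multiset.mem_coe.mpr (List.mem_map_of_mem (f := Prod.snd) hp)
    have := hl p hp
    rwa [empty_ms p.1, h2] at this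
  · rintro ⟨hx, rfl⟩
    refine ⟨_, ?_, S, ⟨S.toList.map (fun a => ((0 : Multiset Empty), a)), ?_, rfl, ?_⟩, rfl, rfl⟩
    · exact (empty_ms m).trans (empty_ms _).symm
    · rintro p hp
      simp only [List.mem_map] at hp
      obtain ⟨a, ha, rfl⟩ := hp
      have : a = c := hSα a (by rwa [← Multiset.mem_toList])
      simpa [this] using hx
    · simp

/-- a nonempty set `A` does not have enough points in the Kleisli
category: there are `y ≠ z : A → A` with `y ∘ x = z ∘ x` for every point
`x : 1 → A` (the terminal object being the empty set). -/
theorem stmt8 (A : Type) [Nonempty A] :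
    ∃ y z : Rel' (Multiset A) A, y ≠ z ∧
      ∀ x : Rel' (Multiset Empty) A, kcomp x y = kcomp x z := by
  obtain ⟨α⟩ := ‹Nonempty A›
  refine ⟨fun m a => m = {α} ∧ a = α, fun m a => m = (α ::ₘ {α}) ∧ a = α, ?_, ?_⟩
  · intro h
    have := congrFun (congrFun h {α}) α
    have h1 : ({α} : Multiset A) = α ::ₘ {α} := by
      exact (this.mp ⟨rfl, rfl⟩).1
    have := congrArg Multiset.card h1
    simp at this
  · intro x
    funext m c
    rw [kcomp_iff x α {α} (by simp) (by simp) m c,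
      kcomp_iff x α (α ::ₘ {α}) (by simp) (by simp +contextual) m c]
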